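/- For every strict orbifold atlas K on a paracompact Hausdorff space Y, the footprint maps ψ_I : W_I → Y induce a homeomorphism |ψ| : |B_K| → Y from the realization of the category B_K onto Y. -/

import Mathlib

open Set Topology

/-! ## Strict orbifold atlases (topological version)

A strict orbifold atlas in the sense of McDuff, "Notes on Kuranishi atlases" /
"Strict orbifold atlases and weighted branched manifolds".
Charts are formalized as topological spaces (smooth structures are not encoded;
"étale" maps are local homeomorphisms). -/

/-- The product group `Γ_I = ∏_{i ∈ I} Γ_i`. -/
abbrev PiGamma {A : Type} (Γ : A → Type) (I : Finset A) : Type := (i : I) → Γ i.1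

/-- Restriction (projection) homomorphism `Γ_J → Γ_I` for `I ⊆ J`. -/
def gres {A : Type} {Γ : A → Type} {I J : Finset A} (h : I ⊆ J) (γ : PiGamma Γ J) :
    PiGamma Γ I := fun i => γ ⟨i.1, h i.2⟩

/-- Extension homomorphism `Γ_I → Γ_J` for `I ⊆ J` (putting `1` in the new slots). -/
def gext {A : Type} [DecidableEq A] {Γ : A → Type} [∀ i, Group (Γ i)] {I J : Finset A}
    (_h : I ⊆ J) (γ : PiGamma Γ I) : PiGamma Γ J :=
  fun j => if hj : j.1 ∈ I then γ ⟨j.1, hj⟩ else 1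

/-- Finite groups are given the discrete topology. -/
instance piGammaTop {A : Type} (Γ : A → Type) (I : Finset A) :
    TopologicalSpace (PiGamma Γ I) := ⊥

/-- A **strict orbifold atlas** on a topological space `Y` (Definition 1.4 of the paper),
with basic charts indexed by `A` and charts indexed by the finite subsets
`I ∈ 𝓘_Y = {I ⊆ A nonempty finite | F_I ≠ ∅}`.  For bookkeeping convenience the chart
data `W I`, `ρ I J`, … are declared for *all* finsets `I ⊆ A`; all axioms are imposed for
(pairs of) nonempty finsets, and the axiom `psi_range` forces `W I = ∅` whenever
`F_I = ∅`, so the charts with `I ∉ 𝓘_Y` carry no information. -/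
structure OrbAtlas (Y : Type*) [TopologicalSpace Y] (A : Type) [DecidableEq A]
    (Γ : A → Type) [∀ i, Group (Γ i)] [∀ i, Finite (Γ i)] where
  /-- the footprints `F_i` of the basic charts -/
  F : A → Set Y
  isOpen_F : ∀ i, IsOpen (F i)
  /-- the footprints cover `Y` -/
  cover_F : ∀ y : Y, ∃ i, y ∈ F i
  /-- the footprint cover is locally finite -/
  locFin_F : LocallyFinite F
  /-- the chart domains `W_I` -/
  W : Finset A → Type
  topW : ∀ I, TopologicalSpace (W I)
  /-- `Γ_I = ∏_{i ∈ I} Γ_i` acts on `W_I` -/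
  act : ∀ I, MulAction (PiGamma Γ I) (W I)
  act_cont : ∀ (I : Finset A) (γ : PiGamma Γ I),
    letI := topW I; letI := act I; Continuous fun x : W I => γ • x
  /-- the footprint maps `ψ_I : W_I → Y` -/
  psi : ∀ I, W I → Y
  psi_cont : ∀ I, letI := topW I; Continuous (psi I)
  /-- `ψ_I` is `Γ_I`-invariant -/
  psi_smul : ∀ (I : Finset A) (γ : PiGamma Γ I) (x : W I),
    letI := act I; psi I (γ • x) = psi I x
  /-- `ψ_I` has image the footprint `F_I = ⋂_{i ∈ I} F_i` -/
  psi_range : ∀ I : Finset A, I.Nonempty → Set.range (psi I) = ⋂ i ∈ I, F i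
  /-- the fibres of `ψ_I` are exactly the `Γ_I`-orbits, so `ψ_I` induces a continuous
  bijection `W_I/Γ_I → F_I` -/
  psi_fib : ∀ I : Finset A, I.Nonempty → ∀ x y : W I,
    psi I x = psi I y ↔ letI := act I; ∃ γ : PiGamma Γ I, γ • x = y
  /-- `ψ_I` is an open map, so the induced bijection `W_I/Γ_I → F_I` is a homeomorphism
  onto the open set `F_I` -/
  psi_open : ∀ I : Finset A, I.Nonempty → letI := topW I; IsOpenMap (psi I)
  /-- when `|I| > 1`, the subgroup `Γ_{I∖{i}} = {γ | γ_i = 1}` acts freely on `W_I` -/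
  free : ∀ (I : Finset A) (i : A) (hi : i ∈ I), 1 < I.card →
    ∀ (γ : PiGamma Γ I) (x : W I), γ ⟨i, hi⟩ = 1 →
      (letI := act I; γ • x = x) → γ = 1
  /-- the coordinate changes (covering maps) `ρ_{IJ} : W_J → W_{IJ} ⊆ W_I`, `I ⊆ J` -/
  rho : ∀ I J : Finset A, W J → W I
  rho_self : ∀ (I : Finset A) (x : W I), rho I I x = x
  rho_cont : ∀ I J : Finset A, I ⊆ J → I.Nonempty →
    letI := topW I; letI := topW J; Continuous (rho I J)
  /-- `ρ_{IJ}` is étale (a local homeomorphism) -/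
  rho_etale : ∀ I J : Finset A, I ⊆ J → I.Nonempty →
    letI := topW I; letI := topW J; IsLocalHomeomorph (rho I J)
  /-- `ψ_I ∘ ρ_{IJ} = ψ_J` -/
  psi_rho : ∀ (I J : Finset A), I ⊆ J → I.Nonempty → ∀ x : W J,
    psi I (rho I J x) = psi J x
  /-- cocycle condition `ρ_{IJ} ∘ ρ_{JK} = ρ_{IK}` -/
  rho_comp : ∀ (I J L : Finset A), I ⊆ J → J ⊆ L → I.Nonempty → ∀ x : W L,
    rho I J (rho J L x) = rho I L x
  /-- `ρ_{IJ}` is equivariant with respect to the projection `ρ^Γ_{IJ} : Γ_J → Γ_I` -/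
  rho_equiv : ∀ (I J : Finset A) (h : I ⊆ J), I.Nonempty →
    ∀ (γ : PiGamma Γ J) (x : W J),
      letI := act I; letI := act J; rho I J (γ • x) = gres h γ • rho I J x
  /-- `ρ_{IJ}` has image `W_{IJ} = ψ_I⁻¹(F_J)` -/
  rho_range : ∀ I J : Finset A, I ⊆ J → I.Nonempty →
    Set.range (rho I J) = psi I ⁻¹' (⋂ i ∈ J, F i)
  /-- the fibres of `ρ_{IJ}` are exactly the orbits of the (free) action of
  `Γ_{J∖I} = {γ : Γ_J | γ|_I = 1}`; together with `rho_etale`, `rho_range` this says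
  that `ρ_{IJ}` is the quotient by the free `Γ_{J∖I}`-action followed by a
  `Γ_I`-equivariant homeomorphism `W_J/Γ_{J∖I} → W_{IJ}` -/
  rho_fib : ∀ (I J : Finset A) (h : I ⊆ J), I.Nonempty → ∀ x y : W J,
    rho I J x = rho I J y ↔
      ∃ γ : PiGamma Γ J, (∀ (i : A) (hi : i ∈ I), γ ⟨i, h hi⟩ = 1) ∧
        (letI := act J; γ • x = y)

attribute [instance] OrbAtlas.topW OrbAtlas.act

namespace OrbAtlas

variable {Y : Type*} [TopologicalSpace Y] {A : Type} [DecidableEq A]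
  {Γ : A → Type} [∀ i, Group (Γ i)] [∀ i, Finite (Γ i)]

/-- The footprint `F_I := ⋂_{i ∈ I} F_i`. -/
def FI (K : OrbAtlas Y A Γ) (I : Finset A) : Set Y := ⋂ i ∈ I, K.F i

/-- The index set `𝓘_Y` of the atlas: nonempty finite `I ⊆ A` with `F_I ≠ ∅`. -/
def mem (K : OrbAtlas Y A Γ) (I : Finset A) : Prop := I.Nonempty ∧ (K.FI I).Nonempty

/-- The space of objects `⊔_{I ∈ 𝓘_Y} W_I` of the categories `B_K` and `G_K`. -/
abbrev Obj (K : OrbAtlas Y A Γ) : Type _ := Σ I : { I : Finset A // K.mem I }, K.W I.1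

/-- The footprint map on objects. -/
def psiObj (K : OrbAtlas Y A Γ) : K.Obj → Y := fun x => K.psi x.1.1 x.2

/-- The space of morphisms `⊔_{I ⊆ J ∈ 𝓘_Y} W_J × Γ_I` of the category `B_K`. -/
abbrev BMor (K : OrbAtlas Y A Γ) : Type _ :=
  Σ p : { p : Finset A × Finset A // K.mem p.1 ∧ K.mem p.2 ∧ p.1 ⊆ p.2 },
    K.W p.1.2 × PiGamma Γ p.1.1

/-- Constructor for morphisms of `B_K`: the morphism `(I,J,y,γ)`. -/
def mkB (K : OrbAtlas Y A Γ) (I J : Finset A) (hI : K.mem I) (hJ : K.mem J)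
    (hIJ : I ⊆ J) (y : K.W J) (γ : PiGamma Γ I) : K.BMor :=
  ⟨⟨(I, J), hI, hJ, hIJ⟩, (y, γ)⟩

/-- The source map of `B_K`:  `(I,J,y,γ) ↦ (I, γ⁻¹ ρ_{IJ}(y))`. -/
def bsrc (K : OrbAtlas Y A Γ) : K.BMor → K.Obj :=
  fun m => ⟨⟨m.1.1.1, m.1.2.1⟩, m.2.2⁻¹ • K.rho m.1.1.1 m.1.1.2 m.2.1⟩

/-- The target map of `B_K`:  `(I,J,y,γ) ↦ (J, y)`. -/
def btgt (K : OrbAtlas Y A Γ) : K.BMor → K.Obj :=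
  fun m => ⟨⟨m.1.1.2, m.1.2.2.1⟩, m.2.1⟩

end OrbAtlas

namespace OrbAtlas

variable {Y : Type*} [TopologicalSpace Y] {A : Type} [DecidableEq A]
  {Γ : A → Type} [∀ i, Group (Γ i)] [∀ i, Finite (Γ i)]

/-- The relation "there is a morphism of `B_K` from `x` to `y`" on objects; the
realization `|B_K|` is the quotient `Quot (K.bStep)` of the object space by the
equivalence relation generated by this relation, with the quotient topology. -/
def bStep (K : OrbAtlas Y A Γ) : K.Obj → K.Obj → Prop :=
  fun x y => ∃ m : K.BMor, K.bsrc m = x ∧ K.btgt m = y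

/-- For every strict orbifold atlas `K` on a paracompact Hausdorff space `Y`, the footprint
maps `ψ_I : W_I → Y` induce a homeomorphism `|ψ| : |B_K| → Y` from the realization of
the category `B_K` onto `Y`. -/
theorem realization_homeomorph
    [T2Space Y] [ParacompactSpace Y] (K : OrbAtlas Y A Γ) :
    ∃ e : Quot K.bStep ≃ₜ Y, ∀ x : K.Obj, e (Quot.mk K.bStep x) = K.psiObj x := by
  classical
  have hstep : ∀ x y : K.Obj, K.bStep x y → K.psiObj x = K.psiObj y := by
    rintro x y ⟨m, rfl, rfl⟩
    obtain ⟨⟨⟨I, J⟩, hI, hJ, hIJ⟩, w, γ⟩ := m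
    show K.psi I (γ⁻¹ • K.rho I J w) = K.psi J w
    rw [K.psi_smul, K.psi_rho I J hIJ hI.1]
  set f : Quot K.bStep → Y := Quot.lift K.psiObj hstep with hf
  have hcont_psi : Continuous K.psiObj := continuous_sigma fun I => K.psi_cont I.1
  have hcont : Continuous f := continuous_quot_lift hstep hcont_psi
  have hsurj : Function.Surjective f := by
    intro y
    obtain ⟨i, hi⟩ := K.cover_F y
    have hmem : K.mem {i} := by
      refine ⟨Finset.singleton_nonempty i, ⟨y, ?_⟩⟩
      simp [FI, hi]
    have hy : y ∈ Set.range (K.psi {i}) := by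
      rw [K.psi_range {i} hmem.1]
      simp [hi]
    obtain ⟨w, hw⟩ := hy
    exact ⟨Quot.mk _ ⟨⟨{i}, hmem⟩, w⟩, hw⟩
  have hinj : Function.Injective f := by
    suffices h : ∀ x x' : K.Obj, K.psiObj x = K.psiObj x' →
        Quot.mk K.bStep x = Quot.mk K.bStep x' by
      intro q q' hq
      obtain ⟨x, rfl⟩ := Quot.exists_rep q
      obtain ⟨x', rfl⟩ := Quot.exists_rep q'
      exact h x x' hq
    rintro ⟨⟨I, hI⟩, w⟩ ⟨⟨J, hJ⟩, w'⟩ hxy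
    set y := K.psi I w with hy
    have hy' : K.psi J w' = y := hxy.symm
    set L := I ∪ J with hL
    have hIL : I ⊆ L := Finset.subset_union_left
    have hJL : J ⊆ L := Finset.subset_union_right
    have hyI : y ∈ ⋂ i ∈ I, K.F i := by
      rw [← K.psi_range I hI.1]; exact ⟨w, rfl⟩
    have hyJ : y ∈ ⋂ i ∈ J, K.F i := by
      rw [← K.psi_range J hJ.1]; exact ⟨w', hy'⟩
    have hyL : y ∈ ⋂ i ∈ L, K.F i := by
      simp only [Set.mem_iInter] at hyI hyJ ⊢
      intro i hiL
      rcases Finset.mem_union.mp hiL with h | h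
      · exact hyI i h
      · exact hyJ i h
    have hmemL : K.mem L := ⟨hI.1.mono hIL, ⟨y, hyL⟩⟩
    have hwz : w ∈ Set.range (K.rho I L) := by
      rw [K.rho_range I L hIL hI.1]
      exact hyL
    obtain ⟨z, hz⟩ := hwz
    have hwz' : w' ∈ Set.range (K.rho J L) := by
      rw [K.rho_range J L hJL hJ.1]
      simpa [Set.mem_preimage, hy'] using hyL
    obtain ⟨z', hz'⟩ := hwz'
    have hpsiz : K.psi L z = K.psi L z' := by
      have h1 : K.psi L z = y := by rw [← K.psi_rho I L hIL hI.1, hz]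
      have h2 : K.psi L z' = y := by rw [← K.psi_rho J L hJL hJ.1, hz']; exact hy'
      rw [h1, h2]
    obtain ⟨γ, hγ⟩ := (K.psi_fib L hmemL.1 z z').mp hpsiz
    have step1 : K.bStep ⟨⟨I, hI⟩, w⟩ ⟨⟨L, hmemL⟩, z⟩ := by
      refine ⟨K.mkB I L hI hmemL hIL z 1, ?_, rfl⟩
      show (⟨⟨I, hI⟩, (1 : PiGamma Γ I)⁻¹ • K.rho I L z⟩ : K.Obj) = ⟨⟨I, hI⟩, w⟩
      rw [inv_one, one_smul, hz]
    have step2 : K.bStep ⟨⟨L, hmemL⟩, z⟩ ⟨⟨L, hmemL⟩, z'⟩ := by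
      refine ⟨K.mkB L L hmemL hmemL (Finset.Subset.refl L) z' γ, ?_, rfl⟩
      show (⟨⟨L, hmemL⟩, γ⁻¹ • K.rho L L z'⟩ : K.Obj) = ⟨⟨L, hmemL⟩, z⟩
      rw [K.rho_self, ← hγ, inv_smul_smul]
    have step3 : K.bStep ⟨⟨J, hJ⟩, w'⟩ ⟨⟨L, hmemL⟩, z'⟩ := by
      refine ⟨K.mkB J L hJ hmemL hJL z' 1, ?_, rfl⟩
      show (⟨⟨J, hJ⟩, (1 : PiGamma Γ J)⁻¹ • K.rho J L z'⟩ : K.Obj) = ⟨⟨J, hJ⟩, w'⟩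
      rw [inv_one, one_smul, hz']
    calc Quot.mk K.bStep ⟨⟨I, hI⟩, w⟩
        = Quot.mk K.bStep ⟨⟨L, hmemL⟩, z⟩ := Quot.sound step1
      _ = Quot.mk K.bStep ⟨⟨L, hmemL⟩, z'⟩ := Quot.sound step2
      _ = Quot.mk K.bStep ⟨⟨J, hJ⟩, w'⟩ := (Quot.sound step3).symm
  have hopenpsi : IsOpenMap K.psiObj := by
    intro V hV
    have himg : K.psiObj '' V =
        ⋃ I : { I : Finset A // K.mem I }, K.psi I.1 '' ((@Sigma.mk { I : Finset A // K.mem I } (fun I => K.W I.1) I) ⁻¹' V) := by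
      ext y
      constructor
      · rintro ⟨⟨I, x⟩, hxV, rfl⟩
        exact Set.mem_iUnion.mpr ⟨I, ⟨x, hxV, rfl⟩⟩
      · intro hy
        obtain ⟨I, x, hxV, rfl⟩ := Set.mem_iUnion.mp hy
        exact ⟨⟨I, x⟩, hxV, rfl⟩
    rw [himg]
    exact isOpen_iUnion fun I =>
      K.psi_open I.1 I.2.1 _ (isOpen_sigma_iff.mp hV I)
  have hopen : IsOpenMap f := by
    intro U hU
    have hV : IsOpen (Quot.mk K.bStep ⁻¹' U) :=
      continuous_quot_mk.isOpen_preimage U hU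
    have : f '' U = K.psiObj '' (Quot.mk K.bStep ⁻¹' U) := by
      ext y
      constructor
      · rintro ⟨q, hq, rfl⟩
        obtain ⟨x, rfl⟩ := Quot.exists_rep q
        exact ⟨x, hq, rfl⟩
      · rintro ⟨x, hx, rfl⟩
        exact ⟨Quot.mk _ x, hx, rfl⟩
    rw [this]
    exact hopenpsi _ hV
  exact ⟨Equiv.toHomeomorphOfContinuousOpen
    (Equiv.ofBijective f ⟨hinj, hsurj⟩) hcont hopen, fun x => rfl⟩

end OrbAtlas
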